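/- Under the conditional independence assumption Z ⟂ R | (Y, A), the conditional expectation of the odds ratio among complete cases given A = a, Z = z equals E[OR(a,Y) | R=1, A=a, Z=z] = [f(R=1 | a, y₁) / f(R=0 | a, y₁)] · [f(R=0, a, z) / f(R=1, a, z)]. -/

import Mathlib

open Finset

variable {A Y Z : Type} [Fintype A] [Fintype Y] [Fintype Z]

/-- Marginal mass `f(a, y)` of the joint mass function `f` on `(A, Y, Z, R)`,
with `R` encoded by `Bool` (`true` meaning `R = 1`). -/
noncomputable def mAY (f : A → Y → Z → Bool → ℝ) (a : A) (y : Y) : ℝ :=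
  ∑ z, ∑ r, f a y z r

/-- Marginal mass `f(a, y, z)`. -/
noncomputable def mAYZ (f : A → Y → Z → Bool → ℝ) (a : A) (y : Y) (z : Z) : ℝ :=
  ∑ r, f a y z r

/-- Marginal mass `f(a, y, r)`. -/
noncomputable def mAYR (f : A → Y → Z → Bool → ℝ) (a : A) (y : Y) (r : Bool) : ℝ :=
  ∑ z, f a y z r

/-- Marginal mass `f(a)`. -/
noncomputable def mA (f : A → Y → Z → Bool → ℝ) (a : A) : ℝ :=
  ∑ y, ∑ z, ∑ r, f a y z r

/-- Marginal mass `f(a, r)`. -/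
noncomputable def mAR (f : A → Y → Z → Bool → ℝ) (a : A) (r : Bool) : ℝ :=
  ∑ y, ∑ z, f a y z r

/-- Marginal mass `f(a, z)`. -/
noncomputable def mAZ (f : A → Y → Z → Bool → ℝ) (a : A) (z : Z) : ℝ :=
  ∑ y, ∑ r, f a y z r

/-- Marginal mass `f(a, z, r)`. -/
noncomputable def mAZR (f : A → Y → Z → Bool → ℝ) (a : A) (z : Z) (r : Bool) : ℝ :=
  ∑ y, f a y z r

/-- The shadow-variable assumption (a): the conditional independence `Z ⟂ R | (Y, A)`,
expressed via joint masses as `f(a,y,z,r) · f(a,y) = f(a,y,z) · f(a,y,r)`,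
i.e. `f(z, r | y, a) = f(z | y, a) · f(r | y, a)`. -/
def CondIndepZR (f : A → Y → Z → Bool → ℝ) : Prop :=
  ∀ (a : A) (y : Y) (z : Z) (r : Bool),
    f a y z r * mAY f a y = mAYZ f a y z * mAYR f a y r

/-- The odds-ratio function
`OR(a,y) = [f(R=0 | a, y) · f(R=1 | a, y₁)] / [f(R=1 | a, y) · f(R=0 | a, y₁)]`,
with reference value `y₁`. -/
noncomputable def OddsRatio (f : A → Y → Z → Bool → ℝ) (y₁ : Y) (a : A) (y : Y) : ℝ :=
  ((mAYR f a y false / mAY f a y) * (mAYR f a y₁ true / mAY f a y₁)) /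
    ((mAYR f a y true / mAY f a y) * (mAYR f a y₁ false / mAY f a y₁))

/-- The conditional expectation of the odds ratio among complete cases given `A = a, Z = z`:
`E[OR(a,Y) | R=1, A=a, Z=z] = Σ_y OR(a,y) · f(y | R=1, a, z)`. -/
noncomputable def expORz (f : A → Y → Z → Bool → ℝ) (y₁ : Y) (a : A) (z : Z) : ℝ :=
  ∑ y, OddsRatio f y₁ a y * (f a y z true / mAZR f a z true)

/-- under the shadow-variable conditional independence `Z ⟂ R | (Y, A)`,
`E[OR(a,Y) | R=1, A=a, Z=z]
  = [f(R=1 | a, y₁) / f(R=0 | a, y₁)] · [f(R=0, a, z) / f(R=1, a, z)]`. -/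
theorem expORz_closed_form
    (f : A → Y → Z → Bool → ℝ)
    (hpos : ∀ (a : A) (y : Y) (z : Z) (r : Bool), 0 < f a y z r)
    (hsum : ∑ a, ∑ y, ∑ z, ∑ r, f a y z r = 1)
    (hci : CondIndepZR f) (y₁ : Y) :
    ∀ (a : A) (z : Z),
      expORz f y₁ a z =
        ((mAYR f a y₁ true / mAY f a y₁) / (mAYR f a y₁ false / mAY f a y₁)) *
          (mAZR f a z false / mAZR f a z true) := by

  intro a z
  have hY : (Finset.univ : Finset Y).Nonempty := ⟨y₁, Finset.mem_univ _⟩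
  have hZ : (Finset.univ : Finset Z).Nonempty := ⟨z, Finset.mem_univ _⟩
  -- positivity facts
  have hMpos : ∀ y : Y, 0 < mAY f a y := by
    intro y
    exact Finset.sum_pos (fun zz _ => Finset.sum_pos (fun r _ => hpos a y zz r)
      ⟨true, Finset.mem_univ _⟩) hZ
  have hm1pos : ∀ y : Y, 0 < mAYR f a y true :=
    fun y => Finset.sum_pos (fun zz _ => hpos a y zz true) hZ
  have hm0pos : ∀ y : Y, 0 < mAYR f a y false :=
    fun y => Finset.sum_pos (fun zz _ => hpos a y zz false) hZ
  have hS1pos : 0 < mAZR f a z true :=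
    Finset.sum_pos (fun y _ => hpos a y z true) hY
  -- key per-y identity
  have key : ∀ y : Y, OddsRatio f y₁ a y * f a y z true =
      (mAYR f a y₁ true / mAYR f a y₁ false) * f a y z false := by
    intro y
    have h1 := hci a y z true
    have h0 := hci a y z false
    have hcross : f a y z true * mAYR f a y false = f a y z false * mAYR f a y true := by
      have hM := (hMpos y).ne'
      have : (f a y z true * mAYR f a y false) * mAY f a y =
          (f a y z false * mAYR f a y true) * mAY f a y := by
        linear_combination mAYR f a y false * h1 - mAYR f a y true * h0
      exact mul_right_cancel₀ hM this
    have hM := (hMpos y).ne'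
    have hM1 := (hMpos y₁).ne'
    have h01 := (hm0pos y₁).ne'
    have h1y := (hm1pos y).ne'
    unfold OddsRatio
    field_simp
    linear_combination (mAYR f a y₁ true) * hcross
  unfold expORz
  have : ∀ y : Y, OddsRatio f y₁ a y * (f a y z true / mAZR f a z true) =
      (mAYR f a y₁ true / mAYR f a y₁ false) * f a y z false / mAZR f a z true := by
    intro y
    rw [mul_div_assoc'] at *
    rw [key y]
  rw [Finset.sum_congr rfl (fun y _ => this y)]
  rw [← Finset.sum_div, ← Finset.mul_sum]
  have hMZR : (∑ y, f a y z false) = mAZR f a z false := rfl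
  rw [hMZR]
  have hM1 := (hMpos y₁).ne'
  have h01 := (hm0pos y₁).ne'
  have h11 := (hm1pos y₁).ne'
  have hS1 := hS1pos.ne'
  field_simp
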